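/- Degree counting for the Slavnov determinant: assuming the Bethe equations for v_1,…,v_N, the function u ↦ ∏_{i=1}^N∏_{j=1}^M [v_i-w_j] · det M_n / ( ∏_{i=1}^n∏_{j=1}^{Ñ}[u_i-w_j] ∏_{i<j≤n}[u_i-u_j] ∏_{i<j≤N}[v_i-v_j] ∏_{i<j≤Ñ}[w_j-w_i] ), viewed as a function of u_n, extends to a trigonometric polynomial of degree M−1 in u_n with zeros at u_n = w_i − γ for all 1 ≤ i ≤ Ñ = N−n. -/

import Mathlib

open Finset

/-- The function `f_i(x) = ([γ]/[v_i-x]) ∏_{k≠i} [v_k-x+γ]`. -/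
noncomputable def fXXZ (γ : ℂ) {N : ℕ} (v : Fin N → ℂ) (i : Fin N) (x : ℂ) : ℂ :=
  Complex.sinh γ / Complex.sinh (v i - x) *
    ∏ k ∈ Finset.univ.erase i, Complex.sinh (v k - x + γ)

/-- The function
`g_i(u) = ([γ]/[v_i-u]) (∏_{k≠i}[v_k-u+γ]∏_k[u-w_k+γ] − ∏_{k≠i}[v_k-u-γ]∏_k[u-w_k])`. -/
noncomputable def gXXZ (γ : ℂ) {N M : ℕ} (v : Fin N → ℂ) (w : Fin M → ℂ)
    (i : Fin N) (x : ℂ) : ℂ :=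
  Complex.sinh γ / Complex.sinh (v i - x) *
    ((∏ k ∈ Finset.univ.erase i, Complex.sinh (v k - x + γ)) *
      (∏ k, Complex.sinh (x - w k + γ)) -
     (∏ k ∈ Finset.univ.erase i, Complex.sinh (v k - x - γ)) *
      (∏ k, Complex.sinh (x - w k)))

/-- The determinant expression for the intermediate Bethe scalar product `S_n`. -/
noncomputable def SXXZ (γ : ℂ) {N M n : ℕ} (v : Fin N → ℂ) (w : Fin M → ℂ)
    (u : Fin n → ℂ) (hn : n ≤ N) (hNM : N ≤ M) : ℂ :=
  (∏ i, ∏ j, Complex.sinh (v i - w j)) *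
    Matrix.det (Matrix.of fun i j : Fin N =>
      if h : (j : ℕ) < N - n then
        fXXZ γ v i (w ⟨j, by have := j.isLt; omega⟩)
      else
        gXXZ γ v w i (u ⟨N - 1 - (j : ℕ), by have := j.isLt; omega⟩)) /
  ((∏ i : Fin n, ∏ j : Fin (N - n),
      Complex.sinh (u i - w ⟨j, by have := j.isLt; omega⟩)) *
   (∏ i : Fin n, ∏ j ∈ Ioi i, Complex.sinh (u i - u j)) *
   (∏ i : Fin N, ∏ j ∈ Ioi i, Complex.sinh (v i - v j)) *
   (∏ i : Fin (N - n), ∏ j ∈ Ioi i,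
      Complex.sinh (w ⟨j, by have := j.isLt; omega⟩ - w ⟨i, by have := i.isLt; omega⟩)))

namespace SlavnovAux
open Complex Polynomial

/-- `linP a` represents `e^x * sinh (a - x)` as a polynomial in `Z = e^{2x}`. -/
noncomputable def linP (a : ℂ) : ℂ[X] :=
  C (Complex.exp a / 2) - C (Complex.exp (-a) / 2) * X

lemma linP_eval (a x : ℂ) :
    (linP a).eval (Complex.exp (2 * x)) = Complex.exp x * Complex.sinh (a - x) := by
  have h1 : Complex.exp x * Complex.exp (a - x) = Complex.exp a := by
    rw [← Complex.exp_add]; congr 1; ring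
  have h2 : Complex.exp x * Complex.exp (-(a - x)) = Complex.exp (-a) * Complex.exp (2 * x) := by
    rw [← Complex.exp_add, ← Complex.exp_add]; congr 1; ring
  simp only [linP, eval_sub, eval_mul, eval_C, eval_X, Complex.sinh]
  linear_combination h2 / 2 - h1 / 2

lemma linP_factor (a : ℂ) :
    linP a = C (-(Complex.exp (-a) / 2)) * (X - C (Complex.exp (2 * a))) := by
  have h : Complex.exp (-a) * Complex.exp (2 * a) = Complex.exp a := by
    rw [← Complex.exp_add]; congr 1; ring
  have h2 : Complex.exp a / 2 = Complex.exp (-a) / 2 * Complex.exp (2 * a) := by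
    linear_combination -h / 2
  rw [linP, h2]
  simp only [map_mul, map_neg]
  ring

lemma key_exp (a b : ℂ) :
    Complex.exp (2 * a) - Complex.exp (2 * b)
      = 2 * Complex.exp (a + b) * Complex.sinh (a - b) := by
  have h1 : Complex.exp (a + b) * Complex.exp (a - b) = Complex.exp (2 * a) := by
    rw [← Complex.exp_add]; congr 1; ring
  have h2 : Complex.exp (a + b) * Complex.exp (-(a - b)) = Complex.exp (2 * b) := by
    rw [← Complex.exp_add]; congr 1; ring
  rw [Complex.sinh]
  linear_combination h2 - h1

lemma sinh_zero_of_exp_eq {a b : ℂ} (h : Complex.exp (2 * a) = Complex.exp (2 * b)) :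
    Complex.sinh (a - b) = 0 := by
  have := key_exp a b
  rw [h, sub_self] at this
  have h2 : (2 : ℂ) * Complex.exp (a + b) ≠ 0 :=
    mul_ne_zero two_ne_zero (Complex.exp_ne_zero _)
  field_simp at this
  exact (mul_eq_zero.mp this.symm).resolve_left h2

lemma exp_ne_of_sinh_ne {a b : ℂ} (h : Complex.sinh (a - b) ≠ 0) :
    Complex.exp (2 * a) ≠ Complex.exp (2 * b) := fun he => h (sinh_zero_of_exp_eq he)

lemma sinh_swap_ne {a b : ℂ} (h : Complex.sinh (a - b) ≠ 0) :
    Complex.sinh (b - a) ≠ 0 := by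
  rw [show b - a = -(a - b) by ring, Complex.sinh_neg]
  exact neg_ne_zero.mpr h

lemma cosh_ne_zero_of_sinh_eq_zero {t : ℂ} (h : Complex.sinh t = 0) :
    Complex.cosh t ≠ 0 := by
  have := Complex.cosh_sq_sub_sinh_sq t
  rw [h] at this
  intro h0
  rw [h0] at this
  simp at this

lemma sinh_sub_of_sinh_eq_zero {t : ℂ} (h : Complex.sinh t = 0) (c : ℂ) :
    Complex.sinh (c - t) = Complex.cosh t * Complex.sinh c := by
  rw [Complex.sinh_sub, h]; ring

/-- A product of distinct linear factors divides a polynomial having those roots. -/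
lemma prod_X_sub_C_dvd {ι : Type*} [DecidableEq ι] (s : Finset ι) (r : ι → ℂ) (p : ℂ[X])
    (hinj : ∀ i ∈ s, ∀ j ∈ s, r i = r j → i = j)
    (hroot : ∀ i ∈ s, p.IsRoot (r i)) : (∏ i ∈ s, (X - C (r i))) ∣ p := by
  induction s using Finset.induction_on with
  | empty => simpa using one_dvd p
  | insert _ _ ha ih =>
    rename_i a s
    obtain ⟨t, ht⟩ := ih (fun i hi j hj => hinj i (Finset.mem_insert_of_mem hi) j
      (Finset.mem_insert_of_mem hj)) (fun i hi => hroot i (Finset.mem_insert_of_mem hi))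
    have hra : p.IsRoot (r a) := hroot a (Finset.mem_insert_self a s)
    rw [ht] at hra
    have hne : (∏ i ∈ s, (X - C (r i))).eval (r a) ≠ 0 := by
      rw [eval_prod]
      apply Finset.prod_ne_zero_iff.mpr
      intro i hi
      simp only [eval_sub, eval_X, eval_C, sub_ne_zero]
      intro he
      exact ha (by rwa [hinj i (Finset.mem_insert_of_mem hi) a (Finset.mem_insert_self a s) he.symm] at hi)
    have hta : t.IsRoot (r a) := by
      have h0 : (∏ i ∈ s, (X - C (r i))).eval (r a) * t.eval (r a) = 0 := by
        rw [← eval_mul]; exact hra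
      exact (mul_eq_zero.mp h0).resolve_left hne
    obtain ⟨t', ht'⟩ := (dvd_iff_isRoot).mpr hta
    refine ⟨t', ?_⟩
    rw [Finset.prod_insert ha, ht, ht']
    ring

/-- A determinant with one column a scalar multiple of another vanishes. -/
lemma det_col_prop {n : ℕ} (A : Matrix (Fin n) (Fin n) ℂ) (i j : Fin n) (hij : i ≠ j) (c : ℂ)
    (h : ∀ l, A l i = c * A l j) : A.det = 0 := by
  have hA : A = A.updateCol i (c • fun l => A l j) := by
    ext l k
    by_cases hk : k = i
    · subst hk
      rw [Matrix.updateCol_self]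
      exact h l
    · rw [Matrix.updateCol_ne hk]
  rw [hA, Matrix.det_updateCol_smul]
  have : (A.updateCol i fun l => A l j).det = 0 := by
    apply Matrix.det_zero_of_column_eq hij
    intro k
    rw [Matrix.updateCol_self, Matrix.updateCol_ne (Ne.symm hij)]
  rw [this]; simp

section Defs

variable (γ : ℂ) {N M m : ℕ} (v : Fin N → ℂ) (w : Fin M → ℂ) (u : Fin (m + 1) → ℂ)

/-- Index of the column containing `g(x)`. -/
def colN (hm : m + 1 ≤ N) : Fin N := ⟨N - (m + 1), by omega⟩

/-- The fixed matrix (column `colN` will be replaced). -/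
noncomputable def Bm (hm : m + 1 ≤ N) (hNM : N ≤ M) : Matrix (Fin N) (Fin N) ℂ :=
  Matrix.of fun i j : Fin N =>
    if h : (j : ℕ) < N - (m + 1) then
      fXXZ γ v i (w ⟨j, by have := j.isLt; omega⟩)
    else
      gXXZ γ v w i (u ⟨N - 1 - (j : ℕ), by have := j.isLt; omega⟩)

/-- Determinant with column `colN` replaced by `b`. -/
noncomputable def Dt (hm : m + 1 ≤ N) (hNM : N ≤ M) (b : Fin N → ℂ) : ℂ :=
  ((Bm γ v w u hm hNM).updateCol (colN hm) b).det

/-- Cofactors. -/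
noncomputable def Cof (hm : m + 1 ≤ N) (hNM : N ≤ M) (l : Fin N) : ℂ :=
  Dt γ v w u hm hNM (Pi.single l 1)

variable (hm : m + 1 ≤ N) (hNM : N ≤ M)

lemma Dt_linear (b : Fin N → ℂ) :
    Dt γ v w u hm hNM b = ∑ l, b l * Cof γ v w u hm hNM l := by
  have h1 : ∀ b' : Fin N → ℂ, Dt γ v w u hm hNM b'
      = Matrix.cramer (Bm γ v w u hm hNM) b' (colN hm) := fun b' =>
    (Matrix.cramer_apply _ _ _).symm
  rw [h1]
  conv_lhs => rw [← Finset.univ_sum_single b]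
  rw [map_sum, Finset.sum_apply]
  apply Finset.sum_congr rfl
  intro l _
  have hsingle : Pi.single l (b l) = b l • (Pi.single l 1 : Fin N → ℂ) := by
    ext k
    by_cases hk : k = l <;> simp [Pi.single_apply, hk]
  rw [hsingle]
  rw [map_smul]
  simp only [Pi.smul_apply, smul_eq_mul]
  rw [← h1]
  rfl

lemma Bm_col_w (j : Fin N) (hj : (j : ℕ) < N - (m + 1)) (jM : Fin M)
    (hjM : (jM : ℕ) = (j : ℕ)) (i : Fin N) :
    Bm γ v w u hm hNM i j = fXXZ γ v i (w jM) := by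
  have hfix : jM = ⟨(j : ℕ), by have := j.isLt; omega⟩ := Fin.ext (by simp [hjM])
  rw [hfix]
  simp only [Bm, Matrix.of_apply]
  rw [dif_pos hj]

lemma Bm_col_u (i : Fin m) (l : Fin N) :
    Bm γ v w u hm hNM l ⟨N - 1 - (i : ℕ), by have := i.isLt; omega⟩
      = gXXZ γ v w l (u i.castSucc) := by
  have hi := i.isLt
  simp only [Bm, Matrix.of_apply]
  rw [dif_neg (by omega)]
  congr 1
  apply congrArg
  apply Fin.ext
  simp [Fin.coe_castSucc]
  omega

lemma Dt_prop_zero (b : Fin N → ℂ) (j : Fin N) (c : ℂ) (hj : j ≠ colN hm)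
    (hb : ∀ l, b l = c * Bm γ v w u hm hNM l j) : Dt γ v w u hm hNM b = 0 := by
  apply det_col_prop _ (colN hm) j (Ne.symm hj) c
  intro l
  rw [Matrix.updateCol_self, Matrix.updateCol_ne hj]
  exact hb l

lemma Dt_gu_zero (i : Fin m) :
    Dt γ v w u hm hNM (fun l => gXXZ γ v w l (u i.castSucc)) = 0 := by
  have hi := i.isLt
  set jU : Fin N := ⟨N - 1 - (i : ℕ), by omega⟩ with hjU
  apply Matrix.det_zero_of_column_eq (i := colN hm) (j := jU)
  · intro h
    have : N - (m + 1) = N - 1 - (i : ℕ) := congrArg Fin.val h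
    omega
  · intro l
    rw [Matrix.updateCol_self, Matrix.updateCol_ne (by
      intro h
      have : N - 1 - (i : ℕ) = N - (m + 1) := congrArg Fin.val h
      omega)]
    exact (Bm_col_u γ v w u hm hNM i l).symm

lemma Dt_fw_zero (j : Fin N) (hj : (j : ℕ) < N - (m + 1)) (jM : Fin M)
    (hjM : (jM : ℕ) = (j : ℕ)) :
    Dt γ v w u hm hNM (fun l => fXXZ γ v l (w jM)) = 0 := by
  apply Dt_prop_zero γ v w u hm hNM _ j 1
  · intro h
    have : (j : ℕ) = N - (m + 1) := congrArg Fin.val h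
    omega
  · intro l
    rw [one_mul, Bm_col_w γ v w u hm hNM j hj jM hjM]

end Defs

section Props

variable (γ : ℂ) {N M m : ℕ} (v : Fin N → ℂ) (w : Fin M → ℂ) (u : Fin (m + 1) → ℂ)

/-- Normalized second half of `g`. -/
noncomputable def phiN (l : Fin N) (x : ℂ) : ℂ :=
  Complex.sinh γ / Complex.sinh (v l - x) *
    ∏ k ∈ Finset.univ.erase l, Complex.sinh (v k - γ - x)

lemma g_decomp (l : Fin N) (x : ℂ) :
    gXXZ γ v w l x = (∏ k, Complex.sinh (x - w k + γ)) * fXXZ γ v l x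
      - (∏ k, Complex.sinh (x - w k)) * phiN γ v l x := by
  have hP : ∏ k ∈ Finset.univ.erase l, Complex.sinh (v k - x - γ)
      = ∏ k ∈ Finset.univ.erase l, Complex.sinh (v k - γ - x) :=
    Finset.prod_congr rfl (fun k _ => by rw [show v k - x - γ = v k - γ - x by ring])
  rw [gXXZ, fXXZ, phiN, hP]
  ring

lemma phi_prop (x : ℂ) (jM : Fin M)
    (h0 : Complex.sinh (x - w jM + γ) = 0)
    (hvl : ∀ l, Complex.sinh (v l - x) ≠ 0)
    (hvwj : ∀ l, Complex.sinh (v l - w jM) ≠ 0)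
    (hvwjγ : ∀ l, Complex.sinh (v l - w jM + γ) ≠ 0) :
    ∃ c : ℂ, ∀ l, phiN γ v l x = c * fXXZ γ v l (w jM) := by
  have ht : Complex.sinh (x + γ - w jM) = 0 := by
    rw [show x + γ - w jM = x - w jM + γ by ring]; exact h0
  have hε : Complex.cosh (x + γ - w jM) ≠ 0 := cosh_ne_zero_of_sinh_eq_zero ht
  set ε := Complex.cosh (x + γ - w jM) with hεdef
  have h1 : ∀ k : Fin N, Complex.sinh (v k - γ - x) = ε * Complex.sinh (v k - w jM) := by
    intro k
    have h := sinh_sub_of_sinh_eq_zero ht (v k - w jM)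
    rw [show v k - w jM - (x + γ - w jM) = v k - γ - x by ring] at h
    exact h
  have h2 : ∀ l : Fin N, Complex.sinh (v l - x) = ε * Complex.sinh (v l - w jM + γ) := by
    intro l
    have h := sinh_sub_of_sinh_eq_zero ht (v l - w jM + γ)
    rw [show v l - w jM + γ - (x + γ - w jM) = v l - x by ring] at h
    exact h
  refine ⟨ε ^ (N - 1) / ε *
      ((∏ k, Complex.sinh (v k - w jM)) / (∏ k, Complex.sinh (v k - w jM + γ))), fun l => ?_⟩
  rw [phiN, fXXZ, h2 l, Finset.prod_congr rfl (fun k _ => h1 k), Finset.prod_mul_distrib,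
    Finset.prod_const]
  have hcard : (Finset.univ.erase l).card = N - 1 := by
    rw [Finset.card_erase_of_mem (Finset.mem_univ l), Finset.card_univ, Fintype.card_fin]
  rw [hcard,
    ← Finset.mul_prod_erase Finset.univ (fun k => Complex.sinh (v k - w jM)) (Finset.mem_univ l),
    ← Finset.mul_prod_erase Finset.univ (fun k => Complex.sinh (v k - w jM + γ))
      (Finset.mem_univ l)]
  have hQ : ∏ k ∈ Finset.univ.erase l, Complex.sinh (v k - w jM + γ) ≠ 0 :=
    Finset.prod_ne_zero_iff.mpr (fun k _ => hvwjγ k)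
  field_simp [hε, hQ, hvwj l, hvwjγ l]

lemma g_prop (x : ℂ) (jM : Fin M)
    (h0 : Complex.sinh (x - w jM + γ) = 0)
    (hvl : ∀ l, Complex.sinh (v l - x) ≠ 0)
    (hvwj : ∀ l, Complex.sinh (v l - w jM) ≠ 0)
    (hvwjγ : ∀ l, Complex.sinh (v l - w jM + γ) ≠ 0) :
    ∃ c : ℂ, ∀ l, gXXZ γ v w l x = c * fXXZ γ v l (w jM) := by
  obtain ⟨c0, hc0⟩ := phi_prop γ v w x jM h0 hvl hvwj hvwjγ
  refine ⟨-(∏ k, Complex.sinh (x - w k)) * c0, fun l => ?_⟩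
  rw [g_decomp, Finset.prod_eq_zero (Finset.mem_univ jM) h0, hc0 l]
  ring

variable (hm : m + 1 ≤ N) (hNM : N ≤ M)

lemma Dt_gwγ_zero (j : Fin N) (hj : (j : ℕ) < N - (m + 1)) (jM : Fin M)
    (hjM : (jM : ℕ) = (j : ℕ))
    (hvwj : ∀ l, Complex.sinh (v l - w jM) ≠ 0)
    (hvwjγ : ∀ l, Complex.sinh (v l - w jM + γ) ≠ 0) :
    Dt γ v w u hm hNM (fun l => gXXZ γ v w l (w jM - γ)) = 0 := by
  obtain ⟨c, hc⟩ := g_prop γ v w (w jM - γ) jM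
    (by rw [show w jM - γ - w jM + γ = 0 by ring]; exact Complex.sinh_zero)
    (fun l => by rw [show v l - (w jM - γ) = v l - w jM + γ by ring]; exact hvwjγ l)
    hvwj hvwjγ
  apply Dt_prop_zero γ v w u hm hNM _ j c
  · intro h
    have : (j : ℕ) = N - (m + 1) := congrArg Fin.val h
    omega
  · intro l
    rw [hc l, Bm_col_w γ v w u hm hNM j hj jM hjM]

lemma Dt_gw_zero (j : Fin N) (hj : (j : ℕ) < N - (m + 1)) (jM : Fin M)
    (hjM : (jM : ℕ) = (j : ℕ)) :
    Dt γ v w u hm hNM (fun l => gXXZ γ v w l (w jM)) = 0 := by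
  apply Dt_prop_zero γ v w u hm hNM _ j (∏ k, Complex.sinh (w jM - w k + γ))
  · intro h
    have : (j : ℕ) = N - (m + 1) := congrArg Fin.val h
    omega
  · intro l
    have h0' : (∏ k, Complex.sinh (w jM - w k)) = 0 :=
      Finset.prod_eq_zero (Finset.mem_univ jM) (by rw [sub_self]; exact Complex.sinh_zero)
    rw [Bm_col_w γ v w u hm hNM j hj jM hjM, g_decomp, h0']
    ring

lemma Dt_phiw_zero (x : ℂ) (j : Fin N) (hj : (j : ℕ) < N - (m + 1)) (jM : Fin M)
    (hjM : (jM : ℕ) = (j : ℕ))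
    (h0 : Complex.sinh (x - w jM + γ) = 0)
    (hvl : ∀ l, Complex.sinh (v l - x) ≠ 0)
    (hvwj : ∀ l, Complex.sinh (v l - w jM) ≠ 0)
    (hvwjγ : ∀ l, Complex.sinh (v l - w jM + γ) ≠ 0) :
    Dt γ v w u hm hNM (fun l => phiN γ v l x) = 0 := by
  obtain ⟨c, hc⟩ := phi_prop γ v w x jM h0 hvl hvwj hvwjγ
  apply Dt_prop_zero γ v w u hm hNM _ j c
  · intro h
    have : (j : ℕ) = N - (m + 1) := congrArg Fin.val h
    omega
  · intro l
    rw [hc l, Bm_col_w γ v w u hm hNM j hj jM hjM]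

end Props

section Polys

variable (γ : ℂ) {N M m : ℕ} (v : Fin N → ℂ) (w : Fin M → ℂ) (u : Fin (m + 1) → ℂ)

lemma prod_linP_eval {ι : Type*} (s : Finset ι) (a : ι → ℂ) (x : ℂ) :
    (∏ k ∈ s, linP (a k)).eval (Complex.exp (2 * x))
      = Complex.exp x ^ s.card * ∏ k ∈ s, Complex.sinh (a k - x) := by
  rw [eval_prod, Finset.prod_congr rfl (fun k (_ : k ∈ s) => linP_eval (a k) x),
    Finset.prod_mul_distrib, Finset.prod_const]

/-- Polynomial representing `e^{Mx} ∏ₖ [x - wₖ + γ]`. -/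
noncomputable def PQg : ℂ[X] := ∏ k, -linP (w k - γ)

/-- Polynomial representing `e^{Mx} ∏ₖ [x - wₖ]`. -/
noncomputable def PQ0 : ℂ[X] := ∏ k, -linP (w k)

lemma PQg_eval (x : ℂ) : (PQg γ w).eval (Complex.exp (2 * x))
    = Complex.exp x ^ M * ∏ k, Complex.sinh (x - w k + γ) := by
  rw [PQg, eval_prod]
  have h : ∀ k : Fin M, (-linP (w k - γ)).eval (Complex.exp (2 * x))
      = Complex.exp x * Complex.sinh (x - w k + γ) := by
    intro k
    rw [eval_neg, linP_eval, show x - w k + γ = -(w k - γ - x) by ring, Complex.sinh_neg]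
    ring
  rw [Finset.prod_congr rfl (fun k _ => h k), Finset.prod_mul_distrib, Finset.prod_const,
    Finset.card_univ, Fintype.card_fin]

lemma PQ0_eval (x : ℂ) : (PQ0 w).eval (Complex.exp (2 * x))
    = Complex.exp x ^ M * ∏ k, Complex.sinh (x - w k) := by
  rw [PQ0, eval_prod]
  have h : ∀ k : Fin M, (-linP (w k)).eval (Complex.exp (2 * x))
      = Complex.exp x * Complex.sinh (x - w k) := by
    intro k
    rw [eval_neg, linP_eval, show x - w k = -(w k - x) by ring, Complex.sinh_neg]
    ring
  rw [Finset.prod_congr rfl (fun k _ => h k), Finset.prod_mul_distrib, Finset.prod_const,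
    Finset.card_univ, Fintype.card_fin]

variable (hm : m + 1 ≤ N) (hNM : N ≤ M)

/-- Polynomial representing `e^{(2N-2)x} ∏ₗ[vₗ-x] · Dt(f(x))`. -/
noncomputable def pF : ℂ[X] :=
  ∑ l, C (Complex.sinh γ * Cof γ v w u hm hNM l) *
    ((∏ k ∈ Finset.univ.erase l, linP (v k)) * ∏ k ∈ Finset.univ.erase l, linP (v k + γ))

/-- Polynomial representing `e^{(2N-2)x} ∏ₗ[vₗ-x] · Dt(φ(x))`. -/
noncomputable def pG : ℂ[X] :=
  ∑ l, C (Complex.sinh γ * Cof γ v w u hm hNM l) *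
    ((∏ k ∈ Finset.univ.erase l, linP (v k)) * ∏ k ∈ Finset.univ.erase l, linP (v k - γ))

/-- The main polynomial, representing `e^{(2N+M-2)x} ∏ₗ[vₗ-x] · Dt(g(x))`. -/
noncomputable def nP : ℂ[X] :=
  PQg γ w * pF γ v w u hm hNM - PQ0 w * pG γ v w u hm hNM

lemma pF_eval (hN : 1 ≤ N) (x : ℂ) :
    (pF γ v w u hm hNM).eval (Complex.exp (2 * x)) = Complex.exp x ^ (2 * N - 2) *
      ∑ l, Complex.sinh γ * Cof γ v w u hm hNM l *
        ((∏ k ∈ Finset.univ.erase l, Complex.sinh (v k - x)) *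
         ∏ k ∈ Finset.univ.erase l, Complex.sinh (v k + γ - x)) := by
  rw [pF, eval_finset_sum, Finset.mul_sum]
  apply Finset.sum_congr rfl
  intro l _
  rw [eval_mul, eval_C, eval_mul, prod_linP_eval, prod_linP_eval]
  have hcard : (Finset.univ.erase l).card = N - 1 := by
    rw [Finset.card_erase_of_mem (Finset.mem_univ l), Finset.card_univ, Fintype.card_fin]
  rw [hcard]
  have hpow : Complex.exp x ^ (N - 1) * Complex.exp x ^ (N - 1)
      = Complex.exp x ^ (2 * N - 2) := by
    rw [← pow_add]; congr 1; omega
  have harg : ∀ k : Fin N, Complex.sinh (v k + γ - x) = Complex.sinh (v k + γ - x) := fun _ => rfl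
  rw [← hpow]; ring

lemma pG_eval (hN : 1 ≤ N) (x : ℂ) :
    (pG γ v w u hm hNM).eval (Complex.exp (2 * x)) = Complex.exp x ^ (2 * N - 2) *
      ∑ l, Complex.sinh γ * Cof γ v w u hm hNM l *
        ((∏ k ∈ Finset.univ.erase l, Complex.sinh (v k - x)) *
         ∏ k ∈ Finset.univ.erase l, Complex.sinh (v k - γ - x)) := by
  rw [pG, eval_finset_sum, Finset.mul_sum]
  apply Finset.sum_congr rfl
  intro l _
  rw [eval_mul, eval_C, eval_mul, prod_linP_eval, prod_linP_eval]
  have hcard : (Finset.univ.erase l).card = N - 1 := by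
    rw [Finset.card_erase_of_mem (Finset.mem_univ l), Finset.card_univ, Fintype.card_fin]
  rw [hcard]
  have hpow : Complex.exp x ^ (N - 1) * Complex.exp x ^ (N - 1)
      = Complex.exp x ^ (2 * N - 2) := by
    rw [← pow_add]; congr 1; omega
  rw [← hpow]; ring

lemma evalFdet (x : ℂ) (hvl : ∀ l, Complex.sinh (v l - x) ≠ 0) :
    (∏ l, Complex.sinh (v l - x)) * Dt γ v w u hm hNM (fun l => fXXZ γ v l x)
      = ∑ l, Complex.sinh γ * Cof γ v w u hm hNM l *
        ((∏ k ∈ Finset.univ.erase l, Complex.sinh (v k - x)) *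
         ∏ k ∈ Finset.univ.erase l, Complex.sinh (v k + γ - x)) := by
  rw [Dt_linear, Finset.mul_sum]
  apply Finset.sum_congr rfl
  intro l _
  rw [fXXZ]
  rw [Finset.prod_congr rfl
    (fun k (_ : k ∈ Finset.univ.erase l) => show Complex.sinh (v k - x + γ)
      = Complex.sinh (v k + γ - x) by rw [show v k - x + γ = v k + γ - x by ring])]
  rw [← Finset.mul_prod_erase Finset.univ (fun k => Complex.sinh (v k - x)) (Finset.mem_univ l)]
  field_simp [hvl l]

lemma evalGdet (x : ℂ) (hvl : ∀ l, Complex.sinh (v l - x) ≠ 0) :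
    (∏ l, Complex.sinh (v l - x)) * Dt γ v w u hm hNM (fun l => phiN γ v l x)
      = ∑ l, Complex.sinh γ * Cof γ v w u hm hNM l *
        ((∏ k ∈ Finset.univ.erase l, Complex.sinh (v k - x)) *
         ∏ k ∈ Finset.univ.erase l, Complex.sinh (v k - γ - x)) := by
  rw [Dt_linear, Finset.mul_sum]
  apply Finset.sum_congr rfl
  intro l _
  rw [phiN]
  rw [← Finset.mul_prod_erase Finset.univ (fun k => Complex.sinh (v k - x)) (Finset.mem_univ l)]
  field_simp [hvl l]

lemma evaln (hN : 1 ≤ N) (x : ℂ) (hvl : ∀ l, Complex.sinh (v l - x) ≠ 0) :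
    (nP γ v w u hm hNM).eval (Complex.exp (2 * x)) = Complex.exp x ^ (2 * N + M - 2) *
      ((∏ l, Complex.sinh (v l - x)) * Dt γ v w u hm hNM (fun l => gXXZ γ v w l x)) := by
  have hDg : Dt γ v w u hm hNM (fun l => gXXZ γ v w l x)
      = (∏ k, Complex.sinh (x - w k + γ)) * Dt γ v w u hm hNM (fun l => fXXZ γ v l x)
        - (∏ k, Complex.sinh (x - w k)) * Dt γ v w u hm hNM (fun l => phiN γ v l x) := by
    rw [Dt_linear, Dt_linear, Dt_linear, Finset.mul_sum, Finset.mul_sum,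
      ← Finset.sum_sub_distrib]
    apply Finset.sum_congr rfl
    intro l _
    rw [g_decomp]
    ring
  have hF := (evalFdet γ v w u hm hNM x hvl).symm
  have hG := (evalGdet γ v w u hm hNM x hvl).symm
  rw [nP, eval_sub, eval_mul, eval_mul, PQg_eval, PQ0_eval,
    pF_eval γ v w u hm hNM hN x, pG_eval γ v w u hm hNM hN x, hF, hG, hDg,
    show 2 * N + M - 2 = M + (2 * N - 2) from by omega, pow_add]
  ring

lemma bethe_key (i : Fin N)
    (hb : ∏ j, Complex.sinh (v i - w j + γ) / Complex.sinh (v i - w j) =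
      ∏ j ∈ Finset.univ.erase i,
        Complex.sinh (v i - v j + γ) / Complex.sinh (v i - v j - γ))
    (hvw : ∀ j, Complex.sinh (v i - w j) ≠ 0)
    (hvwγ : ∀ j, Complex.sinh (v i - w j + γ) ≠ 0) :
    (∏ k, Complex.sinh (v i - w k + γ)) *
        (∏ k ∈ Finset.univ.erase i, Complex.sinh (v k + γ - v i))
      = (∏ k, Complex.sinh (v i - w k)) *
        (∏ k ∈ Finset.univ.erase i, Complex.sinh (v k - γ - v i)) := by
  have hd : ∀ k ∈ Finset.univ.erase i, Complex.sinh (v i - v k - γ) ≠ 0 := by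
    intro k hk h0
    have hR : ∏ j ∈ Finset.univ.erase i,
        (Complex.sinh (v i - v j + γ) / Complex.sinh (v i - v j - γ)) = 0 :=
      Finset.prod_eq_zero hk (by rw [h0, div_zero])
    rw [← hb] at hR
    exact (Finset.prod_ne_zero_iff.mpr
      (fun j _ => div_ne_zero (hvwγ j) (hvw j))) hR
  rw [Finset.prod_div_distrib, Finset.prod_div_distrib,
    div_eq_div_iff (Finset.prod_ne_zero_iff.mpr (fun k _ => hvw k))
      (Finset.prod_ne_zero_iff.mpr hd)] at hb
  have h1 : ∏ k ∈ Finset.univ.erase i, Complex.sinh (v k + γ - v i)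
      = ∏ k ∈ Finset.univ.erase i, -Complex.sinh (v i - v k - γ) :=
    Finset.prod_congr rfl (fun k _ => by
      rw [show v k + γ - v i = -(v i - v k - γ) by ring, Complex.sinh_neg])
  have h2 : ∏ k ∈ Finset.univ.erase i, Complex.sinh (v k - γ - v i)
      = ∏ k ∈ Finset.univ.erase i, -Complex.sinh (v i - v k + γ) :=
    Finset.prod_congr rfl (fun k _ => by
      rw [show v k - γ - v i = -(v i - v k + γ) by ring, Complex.sinh_neg])
  have hneg : ∀ a : Fin N → ℂ, ∏ k ∈ Finset.univ.erase i, -a k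
      = (-1 : ℂ) ^ (Finset.univ.erase i).card * ∏ k ∈ Finset.univ.erase i, a k := by
    intro a
    rw [Finset.prod_congr rfl (fun k (_ : k ∈ Finset.univ.erase i) =>
      show -a k = (-1) * a k by ring), Finset.prod_mul_distrib, Finset.prod_const]
  rw [h1, h2, hneg, hneg]
  linear_combination ((-1 : ℂ) ^ ((Finset.univ.erase i).card)) * hb

lemma nP_root_v (hN : 1 ≤ N) (i : Fin N)
    (hb : ∏ j, Complex.sinh (v i - w j + γ) / Complex.sinh (v i - w j) =
      ∏ j ∈ Finset.univ.erase i,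
        Complex.sinh (v i - v j + γ) / Complex.sinh (v i - v j - γ))
    (hvw : ∀ j, Complex.sinh (v i - w j) ≠ 0)
    (hvwγ : ∀ j, Complex.sinh (v i - w j + γ) ≠ 0) :
    (nP γ v w u hm hNM).IsRoot (Complex.exp (2 * v i)) := by
  have hz : ∀ l : Fin N, l ≠ i → (∏ k ∈ Finset.univ.erase l, Complex.sinh (v k - v i)) = 0 :=
    fun l hl => Finset.prod_eq_zero
      (Finset.mem_erase.mpr ⟨Ne.symm hl, Finset.mem_univ i⟩)
      (by rw [sub_self]; exact Complex.sinh_zero)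
  have hsF : (∑ l, Complex.sinh γ * Cof γ v w u hm hNM l *
        ((∏ k ∈ Finset.univ.erase l, Complex.sinh (v k - v i)) *
         ∏ k ∈ Finset.univ.erase l, Complex.sinh (v k + γ - v i)))
      = Complex.sinh γ * Cof γ v w u hm hNM i *
        ((∏ k ∈ Finset.univ.erase i, Complex.sinh (v k - v i)) *
         ∏ k ∈ Finset.univ.erase i, Complex.sinh (v k + γ - v i)) :=
    Finset.sum_eq_single i (fun l _ hl => by rw [hz l hl]; ring)
      (fun h => absurd (Finset.mem_univ i) h)
  have hsG : (∑ l, Complex.sinh γ * Cof γ v w u hm hNM l *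
        ((∏ k ∈ Finset.univ.erase l, Complex.sinh (v k - v i)) *
         ∏ k ∈ Finset.univ.erase l, Complex.sinh (v k - γ - v i)))
      = Complex.sinh γ * Cof γ v w u hm hNM i *
        ((∏ k ∈ Finset.univ.erase i, Complex.sinh (v k - v i)) *
         ∏ k ∈ Finset.univ.erase i, Complex.sinh (v k - γ - v i)) :=
    Finset.sum_eq_single i (fun l _ hl => by rw [hz l hl]; ring)
      (fun h => absurd (Finset.mem_univ i) h)
  have hkey := bethe_key γ v w i hb hvw hvwγ
  rw [Polynomial.IsRoot.def, nP, eval_sub, eval_mul, eval_mul, PQg_eval, PQ0_eval,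
    pF_eval γ v w u hm hNM hN (v i), pG_eval γ v w u hm hNM hN (v i), hsF, hsG]
  linear_combination (Complex.exp (v i) ^ M * Complex.exp (v i) ^ (2 * N - 2) *
    Complex.sinh γ * Cof γ v w u hm hNM i *
    (∏ k ∈ Finset.univ.erase i, Complex.sinh (v k - v i))) * hkey

end Polys

section Dvd

variable (γ : ℂ) {N M m : ℕ} (v : Fin N → ℂ) (w : Fin M → ℂ) (u : Fin (m + 1) → ℂ)
variable (hm : m + 1 ≤ N) (hNM : N ≤ M)

/-- Embedding of the first `N - (m+1)` indices into `Fin M`. -/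
def embW (j : Fin (N - (m + 1))) : Fin M := ⟨j, by have := j.isLt; omega⟩

/-- The polynomial with roots at the `w_j - γ` points. -/
noncomputable def Pz : ℂ[X] :=
  ∏ j : Fin (N - (m + 1)), (X - C (Complex.exp (2 * (w (embW hm hNM j) - γ))))

/-- Combined index for the denominator roots. -/
abbrev SIdx (N M m : ℕ) := Fin N ⊕ (Fin m ⊕ Fin (N - (m + 1)))

/-- The root locations `v, u, w`. -/
noncomputable def sigmaPt : SIdx N M m → ℂ :=
  Sum.elim (fun l => v l) (Sum.elim (fun i => u i.castSucc) (fun j => w (embW hm hNM j)))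

/-- The `monic` denominator polynomial. -/
noncomputable def eP : ℂ[X] :=
  ∏ r : SIdx N M m, (X - C (Complex.exp (2 * sigmaPt v w u hm hNM r)))

lemma linP_natDegree (a : ℂ) : (linP a).natDegree ≤ 1 := by
  rw [linP]
  refine (natDegree_sub_le _ _).trans (max_le (by simp) ?_)
  exact (natDegree_C_mul_le _ _).trans (by simp)

lemma prod_linP_natDegree {ι : Type*} (s : Finset ι) (a : ι → ℂ) :
    (∏ k ∈ s, linP (a k)).natDegree ≤ s.card := by
  refine (natDegree_prod_le _ _).trans ?_
  calc ∑ k ∈ s, (linP (a k)).natDegree ≤ ∑ _k ∈ s, 1 :=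
        Finset.sum_le_sum (fun k _ => linP_natDegree (a k))
    _ = s.card := by simp

lemma prod_neg_linP_natDegree {ι : Type*} (s : Finset ι) (a : ι → ℂ) :
    (∏ k ∈ s, -linP (a k)).natDegree ≤ s.card := by
  refine (natDegree_prod_le _ _).trans ?_
  calc ∑ k ∈ s, (-linP (a k)).natDegree ≤ ∑ _k ∈ s, 1 :=
        Finset.sum_le_sum (fun k _ => (natDegree_neg _).le.trans (linP_natDegree (a k)))
    _ = s.card := by simp

lemma pF_natDegree (hN : 1 ≤ N) : (pF γ v w u hm hNM).natDegree ≤ 2 * N - 2 := by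
  rw [pF]
  apply Polynomial.natDegree_sum_le_of_forall_le
  intro l _
  refine (natDegree_mul_le).trans ?_
  have h1 := prod_linP_natDegree (Finset.univ.erase l) (fun k => v k)
  have h2 := prod_linP_natDegree (Finset.univ.erase l) (fun k => v k + γ)
  have hcard : (Finset.univ.erase l).card = N - 1 := by
    rw [Finset.card_erase_of_mem (Finset.mem_univ l), Finset.card_univ, Fintype.card_fin]
  have h3 := (natDegree_mul_le
    (p := ∏ k ∈ Finset.univ.erase l, linP (v k))
    (q := ∏ k ∈ Finset.univ.erase l, linP (v k + γ)))
  rw [hcard] at h1 h2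
  simp only [natDegree_C, zero_add]
  omega

lemma pG_natDegree (hN : 1 ≤ N) : (pG γ v w u hm hNM).natDegree ≤ 2 * N - 2 := by
  rw [pG]
  apply Polynomial.natDegree_sum_le_of_forall_le
  intro l _
  refine (natDegree_mul_le).trans ?_
  have h1 := prod_linP_natDegree (Finset.univ.erase l) (fun k => v k)
  have h2 := prod_linP_natDegree (Finset.univ.erase l) (fun k => v k - γ)
  have hcard : (Finset.univ.erase l).card = N - 1 := by
    rw [Finset.card_erase_of_mem (Finset.mem_univ l), Finset.card_univ, Fintype.card_fin]
  have h3 := (natDegree_mul_le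
    (p := ∏ k ∈ Finset.univ.erase l, linP (v k))
    (q := ∏ k ∈ Finset.univ.erase l, linP (v k - γ)))
  rw [hcard] at h1 h2
  simp only [natDegree_C, zero_add]
  omega

lemma nP_natDegree (hN : 1 ≤ N) : (nP γ v w u hm hNM).natDegree ≤ 2 * N + M - 2 := by
  rw [nP]
  refine (natDegree_sub_le _ _).trans (max_le ?_ ?_)
  · refine (natDegree_mul_le).trans ?_
    have h1 : (PQg γ w).natDegree ≤ M := by
      have := prod_neg_linP_natDegree Finset.univ (fun k : Fin M => w k - γ)
      simpa [PQg] using this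
    have h2 := pF_natDegree γ v w u hm hNM hN
    omega
  · refine (natDegree_mul_le).trans ?_
    have h1 : (PQ0 w).natDegree ≤ M := by
      have := prod_neg_linP_natDegree Finset.univ (fun k : Fin M => w k)
      simpa [PQ0] using this
    have h2 := pG_natDegree γ v w u hm hNM hN
    omega

lemma Pz_monic (γ' : ℂ) : (Pz γ' w hm hNM).Monic :=
  monic_prod_of_monic _ _ (fun _ _ => monic_X_sub_C _)

lemma eP_monic : (eP v w u hm hNM).Monic :=
  monic_prod_of_monic _ _ (fun _ _ => monic_X_sub_C _)

lemma Pz_natDegree (γ' : ℂ) : (Pz γ' w hm hNM).natDegree = N - (m + 1) := by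
  rw [Pz, natDegree_prod_of_monic _ _ (fun _ _ => monic_X_sub_C _)]
  simp [natDegree_X_sub_C]

lemma eP_natDegree : (eP v w u hm hNM).natDegree = 2 * N - 1 := by
  rw [eP, natDegree_prod_of_monic _ _ (fun _ _ => monic_X_sub_C _)]
  simp only [natDegree_X_sub_C]
  rw [Finset.sum_const, Finset.card_univ, smul_eq_mul, mul_one]
  have : Fintype.card (SIdx N M m) = N + (m + (N - (m + 1))) := by
    simp [SIdx, Fintype.card_sum]
  rw [this]
  omega

/-- Main construction: the quotient polynomial `q`. -/
lemma exists_q (hγ : Complex.sinh γ ≠ 0)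
    (hvw : ∀ i j, Complex.sinh (v i - w j) ≠ 0)
    (hvwγ : ∀ i j, Complex.sinh (v i - w j + γ) ≠ 0)
    (hvv : ∀ i j, i ≠ j → Complex.sinh (v i - v j) ≠ 0)
    (hww : ∀ i j : Fin M, i ≠ j → Complex.sinh (w i - w j) ≠ 0)
    (huu : ∀ i j : Fin m, i ≠ j → Complex.sinh (u i.castSucc - u j.castSucc) ≠ 0)
    (hvu : ∀ (i : Fin N) (j : Fin m), Complex.sinh (v i - u j.castSucc) ≠ 0)
    (huw : ∀ (i : Fin m) (j : Fin M), Complex.sinh (u i.castSucc - w j) ≠ 0)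
    (hbethe : ∀ i, ∏ j, Complex.sinh (v i - w j + γ) / Complex.sinh (v i - w j) =
      ∏ j ∈ Finset.univ.erase i,
        Complex.sinh (v i - v j + γ) / Complex.sinh (v i - v j - γ))
    (hnd : ∀ (i : Fin m) (j : Fin (N - (m + 1))),
      Complex.sinh (u i.castSucc - w (embW hm hNM j) + γ) ≠ 0) :
    ∃ q : ℂ[X], nP γ v w u hm hNM = Pz γ w hm hNM * eP v w u hm hNM * q ∧
      (Pz γ w hm hNM * q).natDegree ≤ M - 1 := by
  classical
  have hN : 1 ≤ N := by omega
  have hM : 1 ≤ M := by omega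
  have hembWinj : ∀ j j' : Fin (N - (m + 1)), embW hm hNM j = embW hm hNM j' → j = j' := by
    intro j j' h
    exact Fin.ext (by simpa [embW] using congrArg Fin.val h)
  -- Step 1 : Pz ∣ nP
  have hPzdvd : Pz γ w hm hNM ∣ nP γ v w u hm hNM := by
    rw [Pz]
    apply prod_X_sub_C_dvd
    · intro i _ j _ hij
      have h0 := sinh_zero_of_exp_eq hij
      rw [show w (embW hm hNM i) - γ - (w (embW hm hNM j) - γ)
          = w (embW hm hNM i) - w (embW hm hNM j) by ring] at h0
      by_contra hne
      exact hww _ _ (fun he => hne (hembWinj _ _ he)) h0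
    · intro j _
      have hvl : ∀ l, Complex.sinh (v l - (w (embW hm hNM j) - γ)) ≠ 0 := fun l => by
        rw [show v l - (w (embW hm hNM j) - γ) = v l - w (embW hm hNM j) + γ by ring]
        exact hvwγ l _
      rw [Polynomial.IsRoot.def, evaln γ v w u hm hNM hN _ hvl,
        Dt_gwγ_zero γ v w u hm hNM ⟨(j : ℕ), by have := j.isLt; omega⟩ j.isLt
          (embW hm hNM j) rfl (fun l => hvw l _) (fun l => hvwγ l _)]
      ring
  obtain ⟨n1, hn1⟩ := hPzdvd
  -- Step 2 : roots of n1
  have hPzeval : ∀ z : ℂ,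
      (∀ j : Fin (N - (m + 1)), Complex.exp (2 * (w (embW hm hNM j) - γ)) ≠ z) →
      (Pz γ w hm hNM).eval z ≠ 0 := by
    intro z hz
    rw [Pz, eval_prod]
    refine Finset.prod_ne_zero_iff.mpr fun j _ => ?_
    simp only [eval_sub, eval_X, eval_C, sub_ne_zero]
    exact fun h => hz j h.symm
  have hmain : ∀ z : ℂ, (nP γ v w u hm hNM).eval z = 0 → (Pz γ w hm hNM).eval z ≠ 0 →
      n1.IsRoot z := by
    intro z h0 hPz0
    have h : (Pz γ w hm hNM).eval z * n1.eval z = 0 := by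
      rw [← eval_mul, ← hn1]; exact h0
    exact (mul_eq_zero.mp h).resolve_left hPz0
  have hroots : ∀ r : SIdx N M m, n1.IsRoot (Complex.exp (2 * sigmaPt v w u hm hNM r)) := by
    rintro (i | i | j)
    · -- root at v i
      apply hmain
      · exact nP_root_v γ v w u hm hNM hN i (hbethe i) (fun j => hvw i j) (fun j => hvwγ i j)
      · apply hPzeval
        intro j he
        have h0 := sinh_zero_of_exp_eq he
        rw [show w (embW hm hNM j) - γ - sigmaPt v w u hm hNM (Sum.inl i)
            = -(v i - w (embW hm hNM j) + γ) by simp [sigmaPt]; ring,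
          Complex.sinh_neg, neg_eq_zero] at h0
        exact hvwγ i _ h0
    · -- root at u i
      apply hmain
      · have hvl : ∀ l, Complex.sinh (v l - u i.castSucc) ≠ 0 := fun l => hvu l i
        rw [show sigmaPt v w u hm hNM (Sum.inr (Sum.inl i))
            = u i.castSucc by simp [sigmaPt],
          evaln γ v w u hm hNM hN _ hvl, Dt_gu_zero γ v w u hm hNM i]
        ring
      · apply hPzeval
        intro j he
        have h0 := sinh_zero_of_exp_eq he
        rw [show w (embW hm hNM j) - γ - sigmaPt v w u hm hNM (Sum.inr (Sum.inl i))
            = -(u i.castSucc - w (embW hm hNM j) + γ) by simp [sigmaPt]; ring,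
          Complex.sinh_neg, neg_eq_zero] at h0
        exact hnd i j h0
    · -- root at w j
      have hswj : sigmaPt v w u hm hNM (Sum.inr (Sum.inr j)) = w (embW hm hNM j) := by
        simp [sigmaPt]
      rw [hswj]
      by_cases hcol : ∃ j' : Fin (N - (m + 1)),
          Complex.exp (2 * (w (embW hm hNM j') - γ)) = Complex.exp (2 * w (embW hm hNM j))
      · obtain ⟨j', hj'⟩ := hcol
        set ρ := Complex.exp (2 * w (embW hm hNM j)) with hρ
        have hd1 : (X - C ρ) ∣ PQg γ w := by
          have h := linP_factor (w (embW hm hNM j') - γ)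
          have hdvd : (X - C ρ) ∣ -linP (w (embW hm hNM j') - γ) := by
            rw [h, ← hj']
            exact ⟨-C (-(Complex.exp (-(w (embW hm hNM j') - γ)) / 2)), by ring⟩
          exact hdvd.trans (Finset.dvd_prod_of_mem _ (Finset.mem_univ (embW hm hNM j')))
        have hd3 : (X - C ρ) ∣ PQ0 w := by
          have h := linP_factor (w (embW hm hNM j))
          have hdvd : (X - C ρ) ∣ -linP (w (embW hm hNM j)) := by
            rw [h, hρ]
            exact ⟨-C (-(Complex.exp (-w (embW hm hNM j)) / 2)), by ring⟩
          exact hdvd.trans (Finset.dvd_prod_of_mem _ (Finset.mem_univ (embW hm hNM j)))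
        have hd2 : (X - C ρ) ∣ pF γ v w u hm hNM := by
          rw [dvd_iff_isRoot, Polynomial.IsRoot.def, hρ,
            pF_eval γ v w u hm hNM hN (w (embW hm hNM j)),
            ← evalFdet γ v w u hm hNM _ (fun l => hvw l _),
            Dt_fw_zero γ v w u hm hNM ⟨(j : ℕ), by have := j.isLt; omega⟩ j.isLt
              (embW hm hNM j) rfl]
          ring
        have hd4 : (X - C ρ) ∣ pG γ v w u hm hNM := by
          have h0 : Complex.sinh (w (embW hm hNM j) - w (embW hm hNM j') + γ) = 0 := by
            have := sinh_zero_of_exp_eq hj'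
            rw [show w (embW hm hNM j') - γ - w (embW hm hNM j)
                = -(w (embW hm hNM j) - w (embW hm hNM j') + γ) by ring,
              Complex.sinh_neg, neg_eq_zero] at this
            exact this
          rw [dvd_iff_isRoot, Polynomial.IsRoot.def, hρ,
            pG_eval γ v w u hm hNM hN (w (embW hm hNM j)),
            ← evalGdet γ v w u hm hNM _ (fun l => hvw l _),
            Dt_phiw_zero γ v w u hm hNM (w (embW hm hNM j))
              ⟨(j' : ℕ), by have := j'.isLt; omega⟩ j'.isLt (embW hm hNM j') rfl h0
              (fun l => hvw l _) (fun l => hvw l _) (fun l => hvwγ l _)]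
          ring
        have hdd : (X - C ρ) ^ 2 ∣ nP γ v w u hm hNM := by
          rw [nP, pow_two]
          exact dvd_sub (mul_dvd_mul hd1 hd2) (mul_dvd_mul hd3 hd4)
        have hsplit : Pz γ w hm hNM = (X - C ρ) *
            ∏ j'' ∈ Finset.univ.erase j', (X - C (Complex.exp (2 * (w (embW hm hNM j'') - γ)))) := by
          rw [Pz, ← Finset.mul_prod_erase Finset.univ _ (Finset.mem_univ j'), hj']
        set R := ∏ j'' ∈ Finset.univ.erase j',
          (X - C (Complex.exp (2 * (w (embW hm hNM j'') - γ)))) with hR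
        have hXne : (X - C ρ) ≠ 0 := X_sub_C_ne_zero ρ
        have h2 : (X - C ρ) ∣ R * n1 := by
          have h3 : (X - C ρ) ^ 2 ∣ (X - C ρ) * (R * n1) := by
            rw [← mul_assoc, ← hsplit, ← hn1]; exact hdd
          rwa [pow_two, mul_dvd_mul_iff_left hXne] at h3
        have hReval : R.eval ρ ≠ 0 := by
          rw [hR, eval_prod]
          refine Finset.prod_ne_zero_iff.mpr fun j'' hj'' => ?_
          simp only [eval_sub, eval_X, eval_C, sub_ne_zero]
          rw [← hj']
          intro he
          have h0 := sinh_zero_of_exp_eq he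
          rw [show w (embW hm hNM j') - γ - (w (embW hm hNM j'') - γ)
              = w (embW hm hNM j') - w (embW hm hNM j'') by ring] at h0
          have hne : embW hm hNM j' ≠ embW hm hNM j'' := fun he2 =>
            (Finset.mem_erase.mp hj'').1 ((hembWinj _ _ he2).symm)
          exact hww _ _ hne h0
        have h4 := dvd_iff_isRoot.mp h2
        rw [Polynomial.IsRoot.def, eval_mul] at h4
        exact (mul_eq_zero.mp h4).resolve_left hReval
      · push_neg at hcol
        apply hmain
        · rw [evaln γ v w u hm hNM hN _ (fun l => hvw l _),
            Dt_gw_zero γ v w u hm hNM ⟨(j : ℕ), by have := j.isLt; omega⟩ j.isLt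
              (embW hm hNM j) rfl]
          ring
        · exact hPzeval _ hcol
  -- Step 3 : eP ∣ n1
  have hinj : ∀ r ∈ (Finset.univ : Finset (SIdx N M m)), ∀ r' ∈ Finset.univ,
      Complex.exp (2 * sigmaPt v w u hm hNM r) = Complex.exp (2 * sigmaPt v w u hm hNM r') →
      r = r' := by
    rintro (i | i | j) - (i' | i' | j') - h <;> simp only [sigmaPt, Sum.elim_inl, Sum.elim_inr] at h
    · have : i = i' := by
        by_contra hne
        exact hvv i i' hne (sinh_zero_of_exp_eq h)
      rw [this]
    · exact absurd (sinh_zero_of_exp_eq h) (hvu i i')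
    · exact absurd (sinh_zero_of_exp_eq h) (hvw i _)
    · exact absurd (sinh_zero_of_exp_eq h) (sinh_swap_ne (hvu i' i))
    · have : i = i' := by
        by_contra hne
        exact huu i i' hne (sinh_zero_of_exp_eq h)
      rw [this]
    · exact absurd (sinh_zero_of_exp_eq h) (huw i _)
    · exact absurd (sinh_zero_of_exp_eq h) (sinh_swap_ne (hvw i' _))
    · exact absurd (sinh_zero_of_exp_eq h) (sinh_swap_ne (huw i' _))
    · have : j = j' := by
        by_contra hne
        have hne2 : embW hm hNM j ≠ embW hm hNM j' := fun he => hne (hembWinj _ _ he)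
        exact hww _ _ hne2 (sinh_zero_of_exp_eq h)
      rw [this]
  have hePdvd : eP v w u hm hNM ∣ n1 := by
    rw [eP]
    exact prod_X_sub_C_dvd Finset.univ _ n1 hinj (fun r _ => hroots r)
  obtain ⟨q, hq⟩ := hePdvd
  refine ⟨q, by rw [hn1, hq, mul_assoc], ?_⟩
  -- degree bound
  by_cases hq0 : q = 0
  · rw [hq0, mul_zero, natDegree_zero]; omega
  · have hPzne : Pz γ w hm hNM ≠ 0 := (Pz_monic w hm hNM γ).ne_zero
    have hePne : eP v w u hm hNM ≠ 0 := (eP_monic v w u hm hNM).ne_zero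
    have hnPdeg : (nP γ v w u hm hNM).natDegree
        = (Pz γ w hm hNM).natDegree + (eP v w u hm hNM).natDegree + q.natDegree := by
      rw [hn1, hq, ← mul_assoc, natDegree_mul (mul_ne_zero hPzne hePne) hq0,
        natDegree_mul hPzne hePne]
    have h5 := nP_natDegree γ v w u hm hNM hN
    have h6 := natDegree_mul_le (p := Pz γ w hm hNM) (q := q)
    rw [Pz_natDegree] at *
    rw [eP_natDegree] at hnPdeg
    omega

end Dvd

section Assemble

variable (γ : ℂ) {N M m : ℕ} (v : Fin N → ℂ) (w : Fin M → ℂ) (u : Fin (m + 1) → ℂ)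
variable (hm : m + 1 ≤ N) (hNM : N ≤ M)

lemma prod_sinh_flip {ι : Type*} [Fintype ι] (a : ι → ℂ) (x : ℂ) :
    ∏ i : ι, Complex.sinh (x - a i)
      = (-1 : ℂ) ^ (Fintype.card ι) * ∏ i : ι, Complex.sinh (a i - x) := by
  rw [Finset.prod_congr rfl (fun i (_ : i ∈ Finset.univ) =>
    show Complex.sinh (x - a i) = -1 * Complex.sinh (a i - x) by
      rw [show x - a i = -(a i - x) by ring, Complex.sinh_neg]; ring)]
  rw [Finset.prod_mul_distrib, Finset.prod_const, Finset.card_univ]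

lemma eP_eval (hN : 1 ≤ N) (x : ℂ) :
    (eP v w u hm hNM).eval (Complex.exp (2 * x)) =
      Complex.exp x ^ (2 * N - 1) *
        ((2 : ℂ) ^ (2 * N - 1) *
          (∏ r : SIdx N M m, Complex.exp (sigmaPt v w u hm hNM r)) * (-1 : ℂ) ^ (N + m)) *
        ((∏ l, Complex.sinh (v l - x)) *
         ((∏ i : Fin m, Complex.sinh (u i.castSucc - x)) *
          ∏ j : Fin (N - (m + 1)), Complex.sinh (x - w (embW hm hNM j)))) := by
  have hcard : Fintype.card (SIdx N M m) = 2 * N - 1 := by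
    simp only [SIdx, Fintype.card_sum, Fintype.card_fin]
    omega
  rw [eP, eval_prod]
  have h : ∀ r : SIdx N M m,
      (X - C (Complex.exp (2 * sigmaPt v w u hm hNM r))).eval (Complex.exp (2 * x))
        = (2 * Complex.exp (sigmaPt v w u hm hNM r)) *
          (Complex.exp x * Complex.sinh (x - sigmaPt v w u hm hNM r)) := by
    intro r
    simp only [eval_sub, eval_X, eval_C]
    rw [key_exp x (sigmaPt v w u hm hNM r), Complex.exp_add]
    ring
  rw [Finset.prod_congr rfl (fun r _ => h r), Finset.prod_mul_distrib,
    Finset.prod_mul_distrib, Finset.prod_mul_distrib, Finset.prod_const, Finset.prod_const,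
    Finset.card_univ, hcard]
  have hsplit : (∏ r : SIdx N M m, Complex.sinh (x - sigmaPt v w u hm hNM r))
      = (∏ l, Complex.sinh (x - v l)) *
        ((∏ i : Fin m, Complex.sinh (x - u i.castSucc)) *
         ∏ j : Fin (N - (m + 1)), Complex.sinh (x - w (embW hm hNM j))) := by
    rw [Fintype.prod_sum_type, Fintype.prod_sum_type]
    simp only [sigmaPt, Sum.elim_inl, Sum.elim_inr]
  rw [hsplit, prod_sinh_flip (fun l => v l) x, prod_sinh_flip (fun i : Fin m => u i.castSucc) x]
  simp only [Fintype.card_fin]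
  rw [show (-1 : ℂ) ^ (N + m) = (-1 : ℂ) ^ N * (-1 : ℂ) ^ m from (pow_add _ _ _)]
  ring

lemma matrix_update (x : ℂ) :
    (Matrix.of fun i j : Fin N =>
      if h : (j : ℕ) < N - (m + 1) then
        fXXZ γ v i (w ⟨j, by have := j.isLt; omega⟩)
      else
        gXXZ γ v w i
          ((Function.update u (Fin.last m) x) ⟨N - 1 - (j : ℕ), by have := j.isLt; omega⟩))
    = (Bm γ v w u hm hNM).updateCol (colN hm) (fun l => gXXZ γ v w l x) := by
  ext i j
  by_cases hj : (j : ℕ) < N - (m + 1)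
  · have hjne : j ≠ colN hm := by
      intro h
      have h2 : (j : ℕ) = N - (m + 1) := congrArg Fin.val h
      omega
    rw [Matrix.of_apply, dif_pos hj, Matrix.updateCol_ne hjne]
    simp only [Bm, Matrix.of_apply]
    rw [dif_pos hj]
  · by_cases hj2 : j = colN hm
    · subst hj2
      rw [Matrix.of_apply, dif_neg hj, Matrix.updateCol_self]
      have hidx : (⟨N - 1 - ((colN hm : Fin N) : ℕ), by
          have : ((colN hm : Fin N) : ℕ) = N - (m + 1) := rfl
          omega⟩ : Fin (m + 1)) = Fin.last m := by
        apply Fin.ext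
        show N - 1 - (N - (m + 1)) = m
        omega
      rw [hidx, Function.update_self]
    · have hjv : (j : ℕ) ≠ N - (m + 1) := fun h => hj2 (Fin.ext h)
      have hjlt := j.isLt
      rw [Matrix.of_apply, dif_neg hj, Matrix.updateCol_ne hj2]
      simp only [Bm, Matrix.of_apply]
      rw [dif_neg hj]
      congr 1
      apply Function.update_of_ne
      intro h
      have h2 : N - 1 - (j : ℕ) = m := congrArg Fin.val h
      omega

lemma den_split1 (x : ℂ) :
    (∏ i : Fin (m + 1), ∏ j : Fin (N - (m + 1)),
        Complex.sinh ((Function.update u (Fin.last m) x) i - w ⟨j, by have := j.isLt; omega⟩))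
    = (∏ i : Fin m, ∏ j : Fin (N - (m + 1)),
        Complex.sinh (u i.castSucc - w (embW hm hNM j)))
      * ∏ j : Fin (N - (m + 1)), Complex.sinh (x - w (embW hm hNM j)) := by
  rw [Fin.prod_univ_castSucc]
  congr 1
  · apply Finset.prod_congr rfl
    intro i _
    apply Finset.prod_congr rfl
    intro j _
    rw [Function.update_of_ne (Fin.castSucc_lt_last i).ne]
    rfl
  · apply Finset.prod_congr rfl
    intro j _
    rw [Function.update_self]
    rfl

lemma den_split2 (x : ℂ) :
    (∏ i : Fin (m + 1), ∏ j ∈ Ioi i,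
        Complex.sinh ((Function.update u (Fin.last m) x) i - (Function.update u (Fin.last m) x) j))
    = (∏ i : Fin m, ∏ j : Fin m,
        if i < j then Complex.sinh (u i.castSucc - u j.castSucc) else 1)
      * ∏ i : Fin m, Complex.sinh (u i.castSucc - x) := by
  have hIoi : ∀ (n : ℕ) (i : Fin n) (f : Fin n → ℂ),
      (∏ j ∈ Ioi i, f j) = ∏ j, if i < j then f j else 1 := by
    intro n i f
    rw [show Ioi i = Finset.univ.filter (fun j => i < j) from by ext k; simp]
    rw [Finset.prod_filter]
  simp only [hIoi]
  rw [Fin.prod_univ_castSucc]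
  have hlast : (∏ j : Fin (m + 1), if Fin.last m < j then
      Complex.sinh ((Function.update u (Fin.last m) x) (Fin.last m)
        - (Function.update u (Fin.last m) x) j) else 1) = 1 :=
    Finset.prod_eq_one (fun j _ => if_neg (not_lt.mpr (Fin.le_last j)))
  rw [hlast, mul_one, ← Finset.prod_mul_distrib]
  apply Finset.prod_congr rfl
  intro i _
  rw [Fin.prod_univ_castSucc]
  congr 1
  · apply Finset.prod_congr rfl
    intro j _
    by_cases hij : i < j
    · rw [if_pos (by exact Fin.castSucc_lt_castSucc_iff.mpr hij), if_pos hij,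
        Function.update_of_ne (Fin.castSucc_lt_last i).ne,
        Function.update_of_ne (Fin.castSucc_lt_last j).ne]
    · rw [if_neg (fun h => hij (Fin.castSucc_lt_castSucc_iff.mp h)), if_neg hij]
  · rw [if_pos (Fin.castSucc_lt_last i), Function.update_of_ne (Fin.castSucc_lt_last i).ne,
      Function.update_self]

lemma SXXZ_eval (x : ℂ) :
    SXXZ γ v w (Function.update u (Fin.last m) x) hm hNM =
      (∏ i, ∏ j, Complex.sinh (v i - w j)) *
        Dt γ v w u hm hNM (fun l => gXXZ γ v w l x) /
      (((∏ i : Fin m, ∏ j : Fin (N - (m + 1)),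
          Complex.sinh (u i.castSucc - w (embW hm hNM j)))
        * ∏ j : Fin (N - (m + 1)), Complex.sinh (x - w (embW hm hNM j))) *
       ((∏ i : Fin m, ∏ j : Fin m,
          if i < j then Complex.sinh (u i.castSucc - u j.castSucc) else 1)
        * ∏ i : Fin m, Complex.sinh (u i.castSucc - x)) *
       (∏ i : Fin N, ∏ j ∈ Ioi i, Complex.sinh (v i - v j)) *
       (∏ i : Fin (N - (m + 1)), ∏ j ∈ Ioi i,
          Complex.sinh (w (embW hm hNM j) - w (embW hm hNM i)))) := by
  rw [SXXZ]
  rw [den_split1 w u hm hNM x, den_split2 u x, matrix_update γ v w u hm hNM x]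
  rfl

end Assemble

end SlavnovAux

/-- Degree counting for the Slavnov determinant: assuming the Bethe equations for
`v_1,…,v_N`, the expression `S_n`, viewed as a function of `u_n`, extends to a
trigonometric polynomial of degree `M−1` in `u_n` with zeros at `u_n = w_i − γ` for
all `i ≤ Ñ = N − n`. -/
theorem slavnov_degree_counting (γ : ℂ) {m N M : ℕ} (hm : m + 1 ≤ N) (hNM : N ≤ M)
    (v : Fin N → ℂ) (w : Fin M → ℂ) (u : Fin (m + 1) → ℂ)
    (hγ : Complex.sinh γ ≠ 0)
    (hvw : ∀ i j, Complex.sinh (v i - w j) ≠ 0)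
    (hvwγ : ∀ i j, Complex.sinh (v i - w j + γ) ≠ 0)
    (hvv : ∀ i j, i ≠ j → Complex.sinh (v i - v j) ≠ 0)
    (hww : ∀ i j : Fin M, i ≠ j → Complex.sinh (w i - w j) ≠ 0)
    (huu : ∀ i j : Fin m, i ≠ j → Complex.sinh (u i.castSucc - u j.castSucc) ≠ 0)
    (hvu : ∀ (i : Fin N) (j : Fin m), Complex.sinh (v i - u j.castSucc) ≠ 0)
    (huw : ∀ (i : Fin m) (j : Fin M), Complex.sinh (u i.castSucc - w j) ≠ 0)
    (hbethe : ∀ i, ∏ j, Complex.sinh (v i - w j + γ) / Complex.sinh (v i - w j) =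
      ∏ j ∈ Finset.univ.erase i,
        Complex.sinh (v i - v j + γ) / Complex.sinh (v i - v j - γ)) :
    ∃ c : Fin M → ℂ,
      (∀ x : ℂ,
        (∀ j : Fin M, (j : ℕ) < N - (m + 1) → Complex.sinh (x - w j) ≠ 0) →
        (∀ i : Fin m, Complex.sinh (u i.castSucc - x) ≠ 0) →
        (∀ i : Fin N, Complex.sinh (v i - x) ≠ 0) →
        SXXZ γ v w (Function.update u (Fin.last m) x) hm hNM =
          ∑ k, c k * Complex.exp (((M : ℂ) - 1 - 2 * ((k : ℕ) : ℂ)) * x)) ∧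
      (∀ i : Fin M, (i : ℕ) < N - (m + 1) →
        ∑ k, c k * Complex.exp (((M : ℂ) - 1 - 2 * ((k : ℕ) : ℂ)) * (w i - γ)) = 0) := by
  classical
  have hN : 1 ≤ N := by omega
  have hM : 1 ≤ M := by omega
  by_cases hdeg : ∃ (i : Fin m) (j : Fin (N - (m + 1))),
      Complex.sinh (u i.castSucc - w (SlavnovAux.embW hm hNM j) + γ) = 0
  · -- degenerate case: two fixed columns are proportional, determinant vanishes identically
    obtain ⟨i0, j0, hij⟩ := hdeg
    have hi0 := i0.isLt
    have hj0 := j0.isLt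
    refine ⟨0, ?_, ?_⟩
    · intro x _ _ _
      rw [SlavnovAux.SXXZ_eval γ v w u hm hNM x]
      have hDt : SlavnovAux.Dt γ v w u hm hNM (fun l => gXXZ γ v w l x) = 0 := by
        obtain ⟨c, hc⟩ := SlavnovAux.g_prop γ v w (u i0.castSucc) (SlavnovAux.embW hm hNM j0)
          hij (fun l => hvu l i0) (fun l => hvw l _) (fun l => hvwγ l _)
        apply SlavnovAux.det_col_prop _ (⟨N - 1 - (i0 : ℕ), by omega⟩ : Fin N)
          (⟨(j0 : ℕ), by omega⟩ : Fin N)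
          (by intro h; have := congrArg Fin.val h; simp at this; omega) c
        intro l
        have hne1 : (⟨N - 1 - (i0 : ℕ), by omega⟩ : Fin N) ≠ SlavnovAux.colN hm := by
          intro h
          have h2 : N - 1 - (i0 : ℕ) = N - (m + 1) := congrArg Fin.val h
          omega
        have hne2 : (⟨(j0 : ℕ), by omega⟩ : Fin N) ≠ SlavnovAux.colN hm := by
          intro h
          have h2 : (j0 : ℕ) = N - (m + 1) := congrArg Fin.val h
          omega
        rw [Matrix.updateCol_ne hne1, Matrix.updateCol_ne hne2,
          SlavnovAux.Bm_col_u γ v w u hm hNM i0 l,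
          SlavnovAux.Bm_col_w γ v w u hm hNM ⟨(j0 : ℕ), by omega⟩ hj0
            (SlavnovAux.embW hm hNM j0) rfl l]
        exact hc l
      rw [hDt]
      simp
    · intro i _
      simp
  · push_neg at hdeg
    obtain ⟨q, hq, hQdeg⟩ := SlavnovAux.exists_q γ v w u hm hNM hγ hvw hvwγ hvv hww huu hvu
      huw hbethe hdeg
    set A : ℂ := ∏ i, ∏ j, Complex.sinh (v i - w j) with hA
    set U : ℂ := ∏ i : Fin m, ∏ j : Fin (N - (m + 1)),
      Complex.sinh (u i.castSucc - w (SlavnovAux.embW hm hNM j)) with hU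
    set XX : ℂ := ∏ i : Fin m, ∏ j : Fin m,
      if i < j then Complex.sinh (u i.castSucc - u j.castSucc) else 1 with hXX
    set V : ℂ := ∏ i : Fin N, ∏ j ∈ Finset.Ioi i, Complex.sinh (v i - v j) with hV
    set W : ℂ := ∏ i : Fin (N - (m + 1)), ∏ j ∈ Finset.Ioi i,
      Complex.sinh (w (SlavnovAux.embW hm hNM j) - w (SlavnovAux.embW hm hNM i)) with hW
    set eC : ℂ := (2 : ℂ) ^ (2 * N - 1) *
      (∏ r : SlavnovAux.SIdx N M m, Complex.exp (SlavnovAux.sigmaPt v w u hm hNM r)) *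
      (-1 : ℂ) ^ (N + m) with heC
    set Q : Polynomial ℂ := SlavnovAux.Pz γ w hm hNM * q with hQdef
    set K : ℂ := A * eC / (U * XX * V * W) with hK
    have hUne : U ≠ 0 := Finset.prod_ne_zero_iff.mpr fun i _ =>
      Finset.prod_ne_zero_iff.mpr fun j _ => huw i _
    have hXXne : XX ≠ 0 := Finset.prod_ne_zero_iff.mpr fun i _ =>
      Finset.prod_ne_zero_iff.mpr fun j _ => by
        by_cases hij : i < j
        · rw [if_pos hij]; exact huu i j hij.ne
        · rw [if_neg hij]; exact one_ne_zero
    have hVne : V ≠ 0 := Finset.prod_ne_zero_iff.mpr fun i _ =>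
      Finset.prod_ne_zero_iff.mpr fun j hj => hvv i j (Finset.mem_Ioi.mp hj).ne
    have hWne : W ≠ 0 := Finset.prod_ne_zero_iff.mpr fun i _ =>
      Finset.prod_ne_zero_iff.mpr fun j hj => by
        apply hww
        intro h
        have h2 := congrArg Fin.val h
        simp only [SlavnovAux.embW] at h2
        exact (Finset.mem_Ioi.mp hj).ne' (Fin.ext h2)
    have hQdeg' : Q.natDegree ≤ M - 1 := hQdeg
    have hsumc : ∀ y : ℂ,
        (∑ k : Fin M, K * Q.coeff (M - 1 - (k : ℕ)) *
          Complex.exp (((M : ℂ) - 1 - 2 * ((k : ℕ) : ℂ)) * y)) * Complex.exp y ^ (M - 1)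
        = K * Q.eval (Complex.exp (2 * y)) := by
      intro y
      rw [Finset.sum_mul]
      have hterm : ∀ k : Fin M, K * Q.coeff (M - 1 - (k : ℕ)) *
            Complex.exp (((M : ℂ) - 1 - 2 * ((k : ℕ) : ℂ)) * y) * Complex.exp y ^ (M - 1)
          = K * (Q.coeff (M - 1 - (k : ℕ)) * Complex.exp (2 * y) ^ (M - 1 - (k : ℕ))) := by
        intro k
        have hk : (k : ℕ) ≤ M - 1 := by have := k.isLt; omega
        have h1 : Complex.exp y ^ (M - 1) = Complex.exp (((M - 1 : ℕ) : ℂ) * y) :=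
          (Complex.exp_nat_mul y (M - 1)).symm
        have h2 : Complex.exp (((M : ℂ) - 1 - 2 * ((k : ℕ) : ℂ)) * y) *
            Complex.exp (((M - 1 : ℕ) : ℂ) * y)
            = Complex.exp (((M - 1 - (k : ℕ) : ℕ) : ℂ) * (2 * y)) := by
          rw [← Complex.exp_add]
          congr 1
          push_cast [Nat.cast_sub hk, Nat.cast_sub hM]
          ring
        have h3 : Complex.exp (((M - 1 - (k : ℕ) : ℕ) : ℂ) * (2 * y))
            = Complex.exp (2 * y) ^ (M - 1 - (k : ℕ)) := Complex.exp_nat_mul _ _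
        calc K * Q.coeff (M - 1 - (k : ℕ)) *
              Complex.exp (((M : ℂ) - 1 - 2 * ((k : ℕ) : ℂ)) * y) * Complex.exp y ^ (M - 1)
            = K * Q.coeff (M - 1 - (k : ℕ)) *
              (Complex.exp (((M : ℂ) - 1 - 2 * ((k : ℕ) : ℂ)) * y) *
                Complex.exp (((M - 1 : ℕ) : ℂ) * y)) := by rw [h1]; ring
          _ = K * (Q.coeff (M - 1 - (k : ℕ)) * Complex.exp (2 * y) ^ (M - 1 - (k : ℕ))) := by
              rw [h2, h3]; ring
      rw [Finset.sum_congr rfl (fun k _ => hterm k), ← Finset.mul_sum]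
      congr 1
      rw [Fin.sum_univ_eq_sum_range
        (fun k => Q.coeff (M - 1 - k) * Complex.exp (2 * y) ^ (M - 1 - k)) M]
      rw [Finset.sum_range_reflect (fun k => Q.coeff k * Complex.exp (2 * y) ^ k) M]
      exact (Polynomial.eval_eq_sum_range' (lt_of_le_of_lt hQdeg' (by omega)) _).symm
    refine ⟨fun k => K * Q.coeff (M - 1 - (k : ℕ)), ?_, ?_⟩
    · intro x hxw hxu hxv
      have hWx : (∏ j : Fin (N - (m + 1)),
          Complex.sinh (x - w (SlavnovAux.embW hm hNM j))) ≠ 0 :=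
        Finset.prod_ne_zero_iff.mpr fun j _ => hxw (SlavnovAux.embW hm hNM j) j.isLt
      have hUx : (∏ i : Fin m, Complex.sinh (u i.castSucc - x)) ≠ 0 :=
        Finset.prod_ne_zero_iff.mpr fun i _ => hxu i
      have hVx : (∏ l, Complex.sinh (v l - x)) ≠ 0 :=
        Finset.prod_ne_zero_iff.mpr fun l _ => hxv l
      rw [SlavnovAux.SXXZ_eval γ v w u hm hNM x]
      apply mul_right_cancel₀ (pow_ne_zero (M - 1) (Complex.exp_ne_zero x))
      rw [hsumc x, hQdef, Polynomial.eval_mul]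
      have hnP := SlavnovAux.evaln γ v w u hm hNM hN x hxv
      rw [hq, Polynomial.eval_mul, Polynomial.eval_mul,
        SlavnovAux.eP_eval v w u hm hNM hN x,
        show 2 * N + M - 2 = (2 * N - 1) + (M - 1) from by omega,
        show Complex.exp x ^ (2 * N - 1 + (M - 1))
          = Complex.exp x ^ (2 * N - 1) * Complex.exp x ^ (M - 1) from pow_add _ _ _] at hnP
      have hcan : (Complex.exp x ^ (2 * N - 1) * (∏ l, Complex.sinh (v l - x))) *
          (SlavnovAux.Dt γ v w u hm hNM (fun l => gXXZ γ v w l x) * Complex.exp x ^ (M - 1)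
            - (SlavnovAux.Pz γ w hm hNM).eval (Complex.exp (2 * x)) * eC *
              ((∏ i : Fin m, Complex.sinh (u i.castSucc - x)) *
               (∏ j : Fin (N - (m + 1)), Complex.sinh (x - w (SlavnovAux.embW hm hNM j)))) *
              q.eval (Complex.exp (2 * x))) = 0 := by
        rw [heC]
        linear_combination -hnP
      have hDtg : SlavnovAux.Dt γ v w u hm hNM (fun l => gXXZ γ v w l x) *
            Complex.exp x ^ (M - 1)
          = (SlavnovAux.Pz γ w hm hNM).eval (Complex.exp (2 * x)) * eC *
              ((∏ i : Fin m, Complex.sinh (u i.castSucc - x)) *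
               (∏ j : Fin (N - (m + 1)), Complex.sinh (x - w (SlavnovAux.embW hm hNM j)))) *
              q.eval (Complex.exp (2 * x)) := by
        have h1 := (mul_eq_zero.mp hcan).resolve_left
          (mul_ne_zero (pow_ne_zero _ (Complex.exp_ne_zero x)) hVx)
        exact sub_eq_zero.mp h1
      have hD1 : ((∏ i : Fin m, ∏ j : Fin (N - (m + 1)),
            Complex.sinh (u i.castSucc - w (SlavnovAux.embW hm hNM j)))
          * ∏ j : Fin (N - (m + 1)), Complex.sinh (x - w (SlavnovAux.embW hm hNM j))) *
          ((∏ i : Fin m, ∏ j : Fin m,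
            if i < j then Complex.sinh (u i.castSucc - u j.castSucc) else 1)
          * ∏ i : Fin m, Complex.sinh (u i.castSucc - x)) *
          (∏ i : Fin N, ∏ j ∈ Finset.Ioi i, Complex.sinh (v i - v j)) *
          (∏ i : Fin (N - (m + 1)), ∏ j ∈ Finset.Ioi i,
            Complex.sinh (w (SlavnovAux.embW hm hNM j) - w (SlavnovAux.embW hm hNM i))) ≠ 0 :=
        mul_ne_zero (mul_ne_zero (mul_ne_zero (mul_ne_zero hUne hWx) (mul_ne_zero hXXne hUx))
          hVne) hWne
      have hD2 : U * XX * V * W ≠ 0 :=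
        mul_ne_zero (mul_ne_zero (mul_ne_zero hUne hXXne) hVne) hWne
      rw [div_mul_eq_mul_div, mul_assoc A, hDtg, hK, div_mul_eq_mul_div,
        div_eq_div_iff hD1 hD2]
      ring
    · intro i hi
      have h := hsumc (w i - γ)
      have hPz0 : (SlavnovAux.Pz γ w hm hNM).eval (Complex.exp (2 * (w i - γ))) = 0 := by
        rw [SlavnovAux.Pz, Polynomial.eval_prod]
        apply Finset.prod_eq_zero (Finset.mem_univ (⟨(i : ℕ), hi⟩ : Fin (N - (m + 1))))
        have he : SlavnovAux.embW hm hNM ⟨(i : ℕ), hi⟩ = i := Fin.ext rfl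
        rw [he]
        simp
      have hQ0 : Q.eval (Complex.exp (2 * (w i - γ))) = 0 := by
        rw [hQdef, Polynomial.eval_mul, hPz0, zero_mul]
      rw [hQ0, mul_zero] at h
      exact (mul_eq_zero.mp h).resolve_right
        (pow_ne_zero _ (Complex.exp_ne_zero (w i - γ)))
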